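/- Let μ ∈ (0,1). For z in the open unit disk define T_n = 1 if n is odd and T_n = 1 + 2μⁿ/(1−μⁿ) if n is even. Then exp(−Σ_{n=1}^∞ (zⁿ/n) T_n) = (1−z) ∏_{k=1}^∞ (1 − μ^{2k} z²), where the series and infinite product converge absolutely. -/

import Mathlib

set_option maxHeartbeats 1000000


open Complex

/-- For `μ ∈ (0,1)` and `z` in the open unit disk, with `T_n = 1` for odd `n` and
`T_n = 1 + 2μⁿ/(1-μⁿ)` for even `n`, one has
`exp(-∑_{n≥1} (zⁿ/n) T_n) = (1-z) ∏_{k≥1} (1 - μ^{2k} z²)`,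
the series and product converging absolutely. -/
theorem stmt_8 (μ : ℝ) (hμ0 : 0 < μ) (hμ1 : μ < 1) (z : ℂ) (hz : ‖z‖ < 1)
    (T : ℕ → ℂ)
    (hT : ∀ n : ℕ, T n = if n % 2 = 1 then 1 else 1 + 2 * (μ : ℂ) ^ n / (1 - (μ : ℂ) ^ n)) :
    Summable (fun n : ℕ => z ^ (n + 1) / (n + 1) * T (n + 1)) ∧
      Multipliable (fun k : ℕ => 1 - (μ : ℂ) ^ (2 * (k + 1)) * z ^ 2) ∧
      Complex.exp (-(∑' n : ℕ, z ^ (n + 1) / (n + 1) * T (n + 1))) =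
        (1 - z) * ∏' k : ℕ, (1 - (μ : ℂ) ^ (2 * (k + 1)) * z ^ 2) := by
  have hμ0' : (0:ℝ) ≤ μ := hμ0.le
  have hμc : ‖(μ:ℂ)‖ = μ := by rw [Complex.norm_real, Real.norm_eq_abs, abs_of_pos hμ0]
  have hzsq : ‖z‖ ^ 2 < 1 := pow_lt_one₀ (norm_nonneg z) hz two_ne_zero
  have hμpow : ∀ e : ℕ, e ≠ 0 → ‖(μ:ℂ) ^ e‖ < 1 := by
    intro e he
    rw [norm_pow, hμc]
    exact pow_lt_one₀ hμ0' hμ1 he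
  set w : ℕ → ℂ := fun j => (μ : ℂ) ^ (2 * (j + 1)) * z ^ 2 with hw
  have hwnorm : ∀ j, ‖w j‖ < 1 := by
    intro j
    have h1 : μ ^ (2 * (j+1)) ≤ 1 := pow_le_one₀ hμ0' hμ1.le
    have h2 : (0:ℝ) ≤ μ ^ (2*(j+1)) := pow_nonneg hμ0' _
    have h3 : ‖w j‖ = μ ^ (2*(j+1)) * ‖z‖ ^ 2 := by
      simp [hw, norm_mul, norm_pow, hμc, abs_of_pos hμ0]
    rw [h3]
    nlinarith [sq_nonneg (‖z‖), norm_nonneg z]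
  have hwne : ∀ j, (1 : ℂ) - w j ≠ 0 := by
    intro j
    rw [sub_ne_zero]
    intro h
    have h' := hwnorm j
    rw [← h, norm_one] at h'
    exact lt_irrefl _ h'
  have hzne : (1 : ℂ) - z ≠ 0 := by
    rw [sub_ne_zero]
    intro h
    rw [← h, norm_one] at hz
    exact lt_irrefl _ hz
  have hμne : ∀ e : ℕ, e ≠ 0 → (1 : ℂ) - (μ:ℂ) ^ e ≠ 0 := by
    intro e he
    rw [sub_ne_zero]
    intro h
    have h' := hμpow e he
    rw [← h, norm_one] at h'
    exact lt_irrefl _ h'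
  -- shifted Taylor series for -log(1-u)
  have taylor : ∀ u : ℂ, ‖u‖ < 1 →
      HasSum (fun n : ℕ => u ^ (n+1) / ((n:ℂ)+1)) (-Complex.log (1 - u)) := by
    intro u hu
    have h := Complex.hasSum_taylorSeries_neg_log hu
    have h' := (hasSum_nat_add_iff' (f := fun n : ℕ => u ^ n / (n:ℂ)) 1).mpr h
    simp only [Finset.range_one, Finset.sum_singleton, Nat.cast_zero, div_zero, pow_zero,
      sub_zero] at h'
    convert h' using 2 with n
    · rfl
    push_cast
    ring
  -- the double-indexed family
  set F : ℕ × ℕ → ℂ := fun p => (w p.1) ^ (p.2 + 1) / ((p.2 : ℂ) + 1) with hF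
  -- summability of F
  have hFsummable : Summable F := by
    have hb : Summable (fun p : ℕ × ℕ => (μ^2)^p.1 * ((μ^2 * ‖z‖^2)^(p.2+1))) := by
      have ha : Summable (fun j : ℕ => (μ^2)^j) :=
        summable_geometric_of_lt_one (by positivity) (by nlinarith)
      have hbb : Summable (fun m : ℕ => (μ^2 * ‖z‖^2) ^ (m+1)) := by
        have : Summable (fun m : ℕ => (μ^2 * ‖z‖^2) ^ m) :=
          summable_geometric_of_lt_one (by positivity) (by nlinarith)
        exact (summable_nat_add_iff 1).mpr this
      exact Summable.mul_of_nonneg ha hbb (fun x => by positivity) (fun x => by positivity)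
    apply Summable.of_norm_bounded hb
    rintro ⟨j, m⟩
    have hd : (1:ℝ) ≤ ‖((m:ℂ)+1)‖ := by
      have : ((m:ℂ)+1) = ((m+1 : ℕ) : ℂ) := by push_cast; ring
      rw [this, Complex.norm_natCast]
      exact_mod_cast Nat.one_le_iff_ne_zero.mpr (Nat.succ_ne_zero m)
    have h1 : ‖F (j, m)‖ ≤ ‖w j‖ ^ (m+1) := by
      rw [hF]
      simp only [norm_div, norm_pow]
      calc ‖w j‖ ^ (m+1) / ‖((m:ℂ)+1)‖ ≤ ‖w j‖ ^ (m+1) / 1 := by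
            apply div_le_div_of_nonneg_left ?_ ?_ hd
            · positivity
            · norm_num
        _ = ‖w j‖ ^ (m+1) := by ring
    refine h1.trans ?_
    have h3 : ‖w j‖ = μ ^ (2*(j+1)) * ‖z‖ ^ 2 := by
      simp [hw, norm_mul, norm_pow, hμc, abs_of_pos hμ0]
    rw [h3]
    have key : (μ ^ (2*(j+1)) * ‖z‖ ^ 2) ^ (m+1)
        = μ ^ (2*(j+1)*(m+1)) * (‖z‖^2)^(m+1) := by
      rw [mul_pow, ← pow_mul]
    rw [key]
    have hexp : μ ^ (2*(j+1)*(m+1)) ≤ μ ^ (2*j + 2*(m+1)) := by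
      apply pow_le_pow_of_le_one hμ0' hμ1.le
      nlinarith [Nat.le_refl j]
    calc μ ^ (2*(j+1)*(m+1)) * (‖z‖^2)^(m+1)
        ≤ μ ^ (2*j + 2*(m+1)) * (‖z‖^2)^(m+1) := by
          apply mul_le_mul_of_nonneg_right hexp (by positivity)
      _ = (μ^2)^j * ((μ^2 * ‖z‖^2)^(m+1)) := by
          rw [pow_add, mul_pow, ← pow_mul, ← pow_mul]
          ring
  set SF : ℂ := ∑' p, F p with hSF
  have hFhasSum : HasSum F SF := hFsummable.hasSum
  -- sum over m first: fibers give -log(1 - w j)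
  have hJ : HasSum (fun j => -Complex.log (1 - w j)) SF := by
    apply hFhasSum.prod_fiberwise
    intro j
    exact taylor (w j) (hwnorm j)
  -- sum over j first: geometric series
  have hFswap : HasSum (fun p : ℕ × ℕ => F (p.2, p.1)) SF := by
    have := (Equiv.prodComm ℕ ℕ).hasSum_iff.mpr hFhasSum
    exact this
  set G : ℕ → ℂ := fun m =>
    ((μ:ℂ)^(2*(m+1)) * z^(2*(m+1)) / ((m:ℂ)+1)) * (1 - (μ:ℂ)^(2*(m+1)))⁻¹ with hG
  have hGm : ∀ m : ℕ, HasSum (fun j => F (j, m)) (G m) := by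
    intro m
    have hr : ‖(μ:ℂ)^(2*(m+1))‖ < 1 := hμpow _ (by omega)
    have hgeo := (hasSum_geometric_of_norm_lt_one hr).mul_left
      ((μ:ℂ)^(2*(m+1)) * z^(2*(m+1)) / ((m:ℂ)+1))
    convert hgeo using 2 with j
    · rfl
    rw [hF, hw]
    simp only
    rw [mul_pow, ← pow_mul, ← pow_mul]
    have he : 2*(j+1)*(m+1) = 2*(m+1) + (2*(m+1))*j := by ring
    rw [he, pow_add, pow_mul]
    ring_nf
  have hGsum : HasSum G SF := by
    apply hFswap.prod_fiberwise
    intro m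
    exact hGm m
  -- transport to odd indices
  set gterm : ℕ → ℂ := fun n => z^(n+1) / ((n:ℂ)+1) * (T (n+1) - 1) with hgterm
  have hi : Function.Injective (fun m : ℕ => 2*m+1) := by
    intro a b h
    simp only at h
    omega
  have hoff : ∀ n ∉ Set.range (fun m : ℕ => 2*m+1), gterm n = 0 := by
    intro n hn
    have hn2 : n % 2 = 0 := by
      by_contra h
      exact hn ⟨n/2, show 2*(n/2)+1 = n by omega⟩
    have : (n+1) % 2 = 1 := by omega
    rw [hgterm]
    simp only
    rw [hT, if_pos this]
    ring
  have hcomp : ∀ m : ℕ, gterm (2*m+1) = G m := by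
    intro m
    rw [hgterm, hG]
    simp only
    rw [hT]
    rw [if_neg (by omega)]
    have hne : (1 : ℂ) - (μ:ℂ) ^ (2*m+1+1) ≠ 0 := hμne _ (by omega)
    have hne2 : ((2*m+1 : ℕ) : ℂ) + 1 ≠ 0 := Nat.cast_add_one_ne_zero (2*m+1)
    have hme : ((m : ℕ) : ℂ) + 1 ≠ 0 := Nat.cast_add_one_ne_zero m
    have hexps : 2*m+1+1 = 2*(m+1) := by ring
    rw [hexps]
    have hne' : (1 : ℂ) - (μ:ℂ) ^ (2*(m+1)) ≠ 0 := hμne _ (by omega)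
    have hcast : ((2*m+1 : ℕ) : ℂ) + 1 = 2 * (((m:ℕ):ℂ) + 1) := by push_cast; ring
    rw [hcast]
    field_simp
    ring
  have hg : HasSum gterm SF := by
    rw [← hi.hasSum_iff hoff]
    exact HasSum.congr_fun hGsum (fun m => (hcomp m))
  -- the base series
  have hbase : HasSum (fun n : ℕ => z^(n+1) / ((n:ℂ)+1)) (-Complex.log (1 - z)) :=
    taylor z hz
  have hfull : HasSum (fun n : ℕ => z ^ (n + 1) / ((n:ℂ) + 1) * T (n + 1))
      (-Complex.log (1 - z) + SF) := by
    have := hbase.add hg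
    apply HasSum.congr_fun this
    intro n
    rw [hgterm]
    simp only
    ring
  refine ⟨hfull.summable, ?_, ?_⟩
  · -- multipliable
    have hlog : HasSum (fun j => Complex.log (1 - w j)) (-SF) := by
      simpa using hJ.neg
    have hprod := hlog.cexp
    have hprod' : HasProd (fun j : ℕ => 1 - w j) (Complex.exp (-SF)) := by
      apply HasProd.congr_fun hprod
      intro j
      exact (Complex.exp_log (hwne j)).symm
    exact hprod'.multipliable
  · have hlog : HasSum (fun j => Complex.log (1 - w j)) (-SF) := by
      simpa using hJ.neg
    have hprod := hlog.cexp
    have hprod' : HasProd (fun j : ℕ => 1 - w j) (Complex.exp (-SF)) := by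
      apply HasProd.congr_fun hprod
      intro j
      exact (Complex.exp_log (hwne j)).symm
    rw [hfull.tsum_eq, neg_add, neg_neg, Complex.exp_add, Complex.exp_log hzne,
      ← hprod'.tprod_eq]
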